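/- Let T ∈ B(H) satisfy T H ⊆ (ker T)^⊥ ⊆ T* H. Then for every Hilbert space E and every X ∈ B(H, E), writing X₁ = X P_{(ker T)^⊥} and X₂ = X P_{ker T}, one has: X₁ = LT for some bounded L : H → E, and X₂ T^k = 0 for every k ≥ 1. In particular B(H,E) = B(H,E)T + Z_E(T), where Z_E(T) = {Y ∈ B(H,E) : Σ_{n≥0} ‖Y Tⁿ h‖² ≤ c‖h‖² for some c > 0 and all h}. -/

import Mathlib

open scoped ENNReal

noncomputable section

/-- The set `Z_E(T)` of bounded operators `Y : H → E` for which there is `c > 0` with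
`Σ_{n=0}^∞ ‖Y Tⁿ h‖² ≤ c ‖h‖²` for all `h ∈ H`. -/
def Zset {H E : Type*}
    [NormedAddCommGroup H] [InnerProductSpace ℂ H] [CompleteSpace H]
    [NormedAddCommGroup E] [InnerProductSpace ℂ E] [CompleteSpace E]
    (T : H →L[ℂ] H) : Set (H →L[ℂ] E) :=
  {Y | ∃ c > (0 : ℝ), ∀ h : H,
    ∑' n : ℕ, (‖Y ((T ^ n) h)‖₊ : ℝ≥0∞) ^ 2 ≤ ENNReal.ofReal (c * ‖h‖ ^ 2)}

set_option maxHeartbeats 2000000 in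
/-- Let `T ∈ B(H)` satisfy `T H ⊆ (ker T)ᗮ ⊆ T* H`. Then for every Hilbert space `E` and
every `X ∈ B(H,E)`, writing `X₁ = X P_{(ker T)ᗮ}` and `X₂ = X P_{ker T}`, one has
`X₁ = L T` for some bounded `L`, and `X₂ T^k = 0` for every `k ≥ 1`.
In particular `B(H,E) = B(H,E)T + Z_E(T)`. -/
theorem decomposition_selfadjoint_like {H E : Type*}
    [NormedAddCommGroup H] [InnerProductSpace ℂ H] [CompleteSpace H]
    [NormedAddCommGroup E] [InnerProductSpace ℂ E] [CompleteSpace E]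
    (T : H →L[ℂ] H)
    (h1 : ∀ h : H, T h ∈ (LinearMap.ker (T : H →ₗ[ℂ] H))ᗮ)
    (h2 : ((LinearMap.ker (T : H →ₗ[ℂ] H))ᗮ : Set H) ⊆ Set.range (ContinuousLinearMap.adjoint T)) :
    ∀ X : H →L[ℂ] E,
      (∃ L : H →L[ℂ] E,
          X.comp (((LinearMap.ker (T : H →ₗ[ℂ] H))ᗮ).subtypeL.comp
            (Submodule.orthogonalProjectionOnto (LinearMap.ker (T : H →ₗ[ℂ] H))ᗮ)) = L.comp T) ∧
      (∀ k : ℕ, 1 ≤ k →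
          (X.comp ((LinearMap.ker (T : H →ₗ[ℂ] H)).subtypeL.comp
            (Submodule.orthogonalProjectionOnto (LinearMap.ker (T : H →ₗ[ℂ] H))))).comp (T ^ k) = 0) ∧
      (∃ L : H →L[ℂ] E, ∃ Y ∈ Zset T, X = L.comp T + Y) := by
  intro X
  set M : Submodule ℂ H := (LinearMap.ker (T : H →ₗ[ℂ] H))ᗮ with hM
  set Tad : H →L[ℂ] H := ContinuousLinearMap.adjoint T with hTad
  set N : Submodule ℂ H := (LinearMap.ker (Tad : H →ₗ[ℂ] H))ᗮ with hN
  -- T* x ∈ M for all x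
  have hTadM : ∀ x : H, Tad x ∈ M := by
    intro x
    rw [hM, Submodule.mem_orthogonal]
    intro u hu
    have : inner ℂ (Tad x) u = (0 : ℂ) := by
      rw [ContinuousLinearMap.adjoint_inner_left]
      have hu' : T u = 0 := LinearMap.mem_ker.mp hu
      simp [hu']
    simpa [inner_conj_symm] using congrArg (starRingEnd ℂ) this
  -- the bijection A : N → M
  set A : ↥N →L[ℂ] ↥M :=
    ContinuousLinearMap.codRestrict (Tad.comp N.subtypeL) M (fun x => hTadM x) with hA
  have hAinj : A.ker = ⊥ := by
    rw [LinearMap.ker_eq_bot']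
    intro x hx
    have hx0 : Tad (x : H) = 0 := congrArg Subtype.val hx
    have hmem : (x : H) ∈ LinearMap.ker (Tad : H →ₗ[ℂ] H) := LinearMap.mem_ker.mpr hx0
    have h2' : (x : H) ∈ N := x.2
    have hz : (x : H) = 0 := by
      have := (Submodule.mem_orthogonal _ _).mp h2' _ hmem
      have h0 : inner ℂ ((x:H)) ((x:H)) = (0 : ℂ) := by
        simpa [inner_conj_symm] using congrArg (starRingEnd ℂ) this
      exact inner_self_eq_zero.mp h0
    exact Subtype.ext hz
  have hAsurj : A.range = ⊤ := by
    rw [LinearMap.range_eq_top]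
    rintro ⟨m, hm⟩
    obtain ⟨x, hx⟩ := h2 hm
    refine ⟨⟨(Submodule.orthogonalProjectionOnto N x : H), (Submodule.orthogonalProjectionOnto N x).2⟩, ?_⟩
    apply Subtype.ext
    show Tad (Submodule.orthogonalProjectionOnto N x : H) = m
    have hsplit : ((Submodule.orthogonalProjectionOnto (LinearMap.ker (Tad : H →ₗ[ℂ] H)) x : H) + (Submodule.orthogonalProjectionOnto N x : H)) = x :=
      Submodule.starProjection_add_starProjection_orthogonal (K := LinearMap.ker (Tad : H →ₗ[ℂ] H)) x
    have hker : Tad ((Submodule.orthogonalProjectionOnto (LinearMap.ker (Tad : H →ₗ[ℂ] H)) x : H)) = 0 :=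
      (Submodule.orthogonalProjectionOnto (LinearMap.ker (Tad : H →ₗ[ℂ] H)) x).2
    calc Tad (Submodule.orthogonalProjectionOnto N x : H)
        = Tad ((Submodule.orthogonalProjectionOnto (LinearMap.ker (Tad : H →ₗ[ℂ] H)) x : H)
            + (Submodule.orthogonalProjectionOnto N x : H)) := by rw [map_add, hker, zero_add]
      _ = Tad x := by rw [hsplit]
      _ = m := hx
  set eA := ContinuousLinearEquiv.ofBijective A hAinj hAsurj with heA
  set Q : E →L[ℂ] ↥M := (Submodule.orthogonalProjectionOnto M).comp (ContinuousLinearMap.adjoint X) with hQ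
  set K : E →L[ℂ] H := N.subtypeL.comp ((eA.symm : ↥M →L[ℂ] ↥N).comp Q) with hK
  set L : H →L[ℂ] E := ContinuousLinearMap.adjoint K with hL
  set P : H →L[ℂ] H := M.subtypeL.comp (Submodule.orthogonalProjectionOnto M) with hP
  have key : Tad.comp K = P.comp (ContinuousLinearMap.adjoint X) := by
    ext e
    show Tad (K e) = P (ContinuousLinearMap.adjoint X e)
    have h1' : Tad (K e) = (A (eA.symm (Q e)) : H) := rfl
    have h2' : A (eA.symm (Q e)) = Q e := by
      have := eA.apply_symm_apply (Q e)
      set_option linter.unnecessarySimpa false in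
      simpa [heA] using this
    rw [h1', h2']
    rfl
  have hXP : X.comp P = L.comp T := by
    have hadj : ContinuousLinearMap.adjoint (X.comp P)
        = ContinuousLinearMap.adjoint (L.comp T) := by
      rw [ContinuousLinearMap.adjoint_comp X P, ContinuousLinearMap.adjoint_comp L T]
      have hPsa : ContinuousLinearMap.adjoint P = P :=
        (isSelfAdjoint_starProjection M)
      rw [hPsa, hL, ContinuousLinearMap.adjoint_adjoint, ← key]
    calc X.comp P = ContinuousLinearMap.adjoint (ContinuousLinearMap.adjoint (X.comp P)) :=
          (ContinuousLinearMap.adjoint_adjoint _).symm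
      _ = ContinuousLinearMap.adjoint (ContinuousLinearMap.adjoint (L.comp T)) := by rw [hadj]
      _ = L.comp T := ContinuousLinearMap.adjoint_adjoint _
  -- part 2
  set X₂ : H →L[ℂ] E :=
    X.comp ((LinearMap.ker (T : H →ₗ[ℂ] H)).subtypeL.comp (Submodule.orthogonalProjectionOnto (LinearMap.ker (T : H →ₗ[ℂ] H)))) with hX2
  have part2 : ∀ k : ℕ, 1 ≤ k → X₂.comp (T ^ k) = 0 := by
    intro k hk
    ext h
    obtain ⟨j, rfl⟩ := Nat.exists_eq_add_of_le hk
    have hmem : (T ^ (1 + j)) h ∈ M := by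
      rw [pow_add, pow_one]
      exact h1 _
    show X₂ ((T ^ (1 + j)) h) = 0
    rw [hX2]
    simp only [ContinuousLinearMap.comp_apply, ContinuousLinearMap.coe_comp']
    have : Submodule.orthogonalProjectionOnto (LinearMap.ker (T : H →ₗ[ℂ] H)) ((T ^ (1 + j)) h) = 0 :=
      Submodule.orthogonalProjectionOnto_apply_of_mem_orthogonal hmem
    show X ((Submodule.orthogonalProjectionOnto (LinearMap.ker (T : H →ₗ[ℂ] H)) ((T ^ (1 + j)) h) : H)) = 0
    rw [this]
    simp
  refine ⟨⟨L, hXP⟩, part2, ⟨L, X₂, ?_, ?_⟩⟩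
  · -- X₂ ∈ Zset T
    refine ⟨‖X₂‖ ^ 2 + 1, by positivity, fun h => ?_⟩
    have hsum : ∀ n : ℕ, n ≠ 0 → (‖X₂ ((T ^ n) h)‖₊ : ℝ≥0∞) ^ 2 = 0 := by
      intro n hn
      have h0 : X₂.comp (T ^ n) = 0 := part2 n (Nat.one_le_iff_ne_zero.mpr hn)
      have : X₂ ((T ^ n) h) = 0 := by
        have := ContinuousLinearMap.ext_iff.mp h0 h
        simpa using this
      rw [this]
      simp
    rw [tsum_eq_single 0 (fun n hn => hsum n hn)]
    simp only [pow_zero, ContinuousLinearMap.one_apply]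
    have hb : ‖X₂ h‖ ≤ ‖X₂‖ * ‖h‖ := X₂.le_opNorm h
    have hb2 : ‖X₂ h‖ ^ 2 ≤ (‖X₂‖ ^ 2 + 1) * ‖h‖ ^ 2 := by
      nlinarith [norm_nonneg (X₂ h), norm_nonneg X₂, norm_nonneg h, sq_nonneg ‖h‖]
    calc ((‖X₂ h‖₊ : ℝ≥0∞)) ^ 2 = ENNReal.ofReal (‖X₂ h‖ ^ 2) := by
          rw [ENNReal.ofReal_pow (norm_nonneg _), ofReal_norm, enorm_eq_nnnorm]
      _ ≤ ENNReal.ofReal ((‖X₂‖ ^ 2 + 1) * ‖h‖ ^ 2) := ENNReal.ofReal_le_ofReal hb2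
  · -- X = L.comp T + X₂
    ext h
    show X h = L (T h) + X₂ h
    have hsplit : ((Submodule.orthogonalProjectionOnto (LinearMap.ker (T : H →ₗ[ℂ] H)) h : H) + (Submodule.orthogonalProjectionOnto M h : H)) = h :=
      Submodule.starProjection_add_starProjection_orthogonal (K := LinearMap.ker (T : H →ₗ[ℂ] H)) h
    have h1'' : X h = X ((Submodule.orthogonalProjectionOnto (LinearMap.ker (T : H →ₗ[ℂ] H)) h : H))
        + X ((Submodule.orthogonalProjectionOnto M h : H)) := by
      rw [← map_add]
      exact congrArg X hsplit.symm
    have hX1 : X ((Submodule.orthogonalProjectionOnto M h : H)) = L (T h) := by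
      have := ContinuousLinearMap.ext_iff.mp hXP h
      simpa [hP] using this
    rw [h1'', hX1, hX2]
    simp only [ContinuousLinearMap.comp_apply, ContinuousLinearMap.coe_comp',
      Function.comp_apply, Submodule.subtypeL_apply]
    exact add_comm _ _
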